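/- For n ≥ 4, the exponent set of PSC_n^{1,1} is {2(t+1) : 0 ≤ t ≤ ⌊(n−2)/2⌋}, and the exponent set of PSC_n^{0,1} is {2t : 2 ≤ t ≤ n−1}; in particular 2(n−1) is attained by a primitive symmetric companion matrix of order n. -/

import Mathlib

def IsPrimitive {n : ℕ} (A : Matrix (Fin n) (Fin n) ℝ) : Prop :=
  (∀ i j, 0 ≤ A i j) ∧ ∃ k : ℕ, 0 < k ∧ ∀ i j, 0 < (A ^ k) i j

def ExpIs {n : ℕ} (A : Matrix (Fin n) (Fin n) ℝ) (e : ℕ) : Prop :=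
  IsLeast {k : ℕ | 0 < k ∧ ∀ i j, 0 < (A ^ k) i j} e

/-- A `(0,1)` companion matrix: superdiagonal entries `1` and all other entries
`0` in the first `n-1` rows; last-row entries in `{0,1}`. -/
def IsCompanion {n : ℕ} (C : Matrix (Fin n) (Fin n) ℝ) : Prop :=
  ∀ i j : Fin n,
    if (i : ℕ) + 1 < n then (C i j = if (j : ℕ) = (i : ℕ) + 1 then 1 else 0)
    else (C i j = 0 ∨ C i j = 1)

/-- The set `C_n^{α,ε}` of symmetric companion matrices `C + Cᵀ` with
`c_{n,1} = α` and `c_{n,n} = ε`. -/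
def companionClass (n : ℕ) (hn : 0 < n) (α ε : ℝ) :
    Set (Matrix (Fin n) (Fin n) ℝ) :=
  {A | ∃ C : Matrix (Fin n) (Fin n) ℝ, IsCompanion C ∧
    C ⟨n - 1, by omega⟩ ⟨0, hn⟩ = α ∧ C ⟨n - 1, by omega⟩ ⟨n - 1, by omega⟩ = ε ∧
    A = C + C.transpose}

/-- `mRun S` : the maximum length of a run of consecutive integers contained in
`S` (`0` for the empty set). -/
noncomputable def mRun (S : Set ℕ) : ℕ := sSup {L : ℕ | ∃ a : ℕ, ∀ t, t < L → a + t ∈ S}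

/-- The exponent set of a family of matrices. -/
def expSet {n : ℕ} (X : Set (Matrix (Fin n) (Fin n) ℝ)) : Set ℕ :=
  {e | ∃ A ∈ X, IsPrimitive A ∧ ExpIs A e}

namespace PSC

/-- Adjacency of the path `0 — 1 — ⋯ — v` together with chords/loop from `v`
to every element of `S`. -/
def Adj (v : ℕ) (S : ℕ → Prop) (i j : ℕ) : Prop :=
  i ≤ v ∧ j ≤ v ∧ (j = i + 1 ∨ i = j + 1 ∨ (i = v ∧ S j) ∨ (j = v ∧ S i))

theorem Adj.symm {v : ℕ} {S : ℕ → Prop} {i j : ℕ} (h : Adj v S i j) : Adj v S j i := by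
  obtain ⟨h1, h2, h3⟩ := h; exact ⟨h2, h1, by tauto⟩

/-- `HW v S i j k` : there is a walk of length exactly `k` from `i` to `j`. -/
def HW (v : ℕ) (S : ℕ → Prop) (i j k : ℕ) : Prop :=
  ∃ f : ℕ → ℕ, f 0 = i ∧ f k = j ∧ ∀ t, t < k → Adj v S (f t) (f (t + 1))

variable {v : ℕ} {S : ℕ → Prop} {i j m a b k d : ℕ}

theorem hw_refl : HW v S i i 0 :=
  ⟨fun _ => i, rfl, rfl, fun t ht => absurd ht (Nat.not_lt_zero t)⟩

theorem hw_single (h : Adj v S i j) : HW v S i j 1 := by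
  refine ⟨fun t => if t = 0 then i else j, by simp, by simp, ?_⟩
  intro t ht
  interval_cases t
  simpa using h

theorem hw_concat (h1 : HW v S i m a) (h2 : HW v S m j b) : HW v S i j (a + b) := by
  obtain ⟨f, hf0, hfa, hf⟩ := h1
  obtain ⟨g, hg0, hgb, hg⟩ := h2
  have key : ∀ t, t ≤ a → (if t < a then f t else g (t - a)) = f t := by
    intro t ht
    by_cases h : t < a
    · rw [if_pos h]
    · rw [if_neg h, show t - a = 0 by omega, hg0, show t = a by omega, hfa]
  refine ⟨fun t => if t < a then f t else g (t - a), ?_, ?_, ?_⟩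
  · show (if 0 < a then f 0 else g (0 - a)) = i
    rw [key 0 (by omega), hf0]
  · show (if a + b < a then f (a + b) else g (a + b - a)) = j
    rw [if_neg (by omega), show a + b - a = b by omega, hgb]
  · intro t ht
    show Adj v S (if t < a then f t else g (t - a))
        (if t + 1 < a then f (t + 1) else g (t + 1 - a))
    by_cases h : t + 1 ≤ a
    · rw [key t (by omega), key (t + 1) h]
      exact hf t (by omega)
    · rw [if_neg (by omega), if_neg (by omega), show t + 1 - a = (t - a) + 1 by omega]
      exact hg (t - a) (by omega)

theorem hw_symm (h : HW v S i j k) : HW v S j i k := by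
  obtain ⟨f, h0, hk, hs⟩ := h
  refine ⟨fun t => f (k - t), by simp [hk], by simp [h0], ?_⟩
  intro t ht
  have h1 : k - (t + 1) < k := by omega
  have h2 : k - (t + 1) + 1 = k - t := by omega
  have h3 := (hs _ h1).symm
  rw [h2] at h3
  exact h3

theorem hw_tail (h : HW v S i j (k + 1)) : ∃ m, Adj v S i m ∧ HW v S m j k := by
  obtain ⟨f, h0, hk, hs⟩ := h
  refine ⟨f 1, h0 ▸ hs 0 (by omega), fun t => f (t + 1), rfl, hk, ?_⟩
  intro t ht
  exact hs (t + 1) (by omega)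

theorem hw_up (h : i + d ≤ v) : HW v S i (i + d) d := by
  induction d with
  | zero => exact hw_refl
  | succ d ih =>
      have h1 : HW v S i (i + d) d := ih (by omega)
      have h2 : Adj v S (i + d) (i + d + 1) := ⟨by omega, by omega, Or.inl rfl⟩
      exact hw_concat h1 (hw_single h2)

theorem hw_loop (hv : S v) : ∀ k, HW v S v v k := by
  intro k
  induction k with
  | zero => exact hw_refl
  | succ k ih => exact hw_concat ih (hw_single ⟨le_refl v, le_refl v, by tauto⟩)

theorem hw_bounce (hv : S v) (hi : i ≤ v) : ∀ m, HW v S i i (2 * m) := by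
  have h2 : HW v S i i 2 := by
    by_cases h : i = v
    · subst h; exact hw_loop hv 2
    · have ha : Adj v S i (i + 1) := ⟨by omega, by omega, Or.inl rfl⟩
      exact hw_concat (hw_single ha) (hw_single ha.symm)
  intro m
  induction m with
  | zero => exact hw_refl
  | succ m ih =>
      have := hw_concat ih h2
      rw [show 2 * m + 2 = 2 * (m + 1) by omega] at this
      exact this

/-- Distance from `i` to the hub `v`. -/
noncomputable def D (v : ℕ) (S : ℕ → Prop) (i : ℕ) : ℕ := sInf {k | HW v S i v k}

theorem D_le (h : HW v S i v k) : D v S i ≤ k := Nat.sInf_le h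

theorem D_le_path (hi : i ≤ v) : D v S i ≤ v - i := by
  have := hw_up (v := v) (S := S) (i := i) (d := v - i) (by omega)
  rw [show i + (v - i) = v by omega] at this
  exact D_le this

theorem D_mem (hi : i ≤ v) : HW v S i v (D v S i) := by
  show D v S i ∈ {k | HW v S i v k}
  apply Nat.sInf_mem
  have := hw_up (v := v) (S := S) (i := i) (d := v - i) (by omega)
  rw [show i + (v - i) = v by omega] at this
  exact ⟨v - i, this⟩

theorem D_pos (hi : i ≤ v) (hne : i ≠ v) : 1 ≤ D v S i := by
  by_contra h
  have h0 : D v S i = 0 := by omega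
  have := D_mem (v := v) (S := S) hi
  rw [h0] at this
  obtain ⟨f, hf0, hfk, -⟩ := this
  exact hne (hf0 ▸ hfk)

theorem D_le_chord {s : ℕ} (hs : S s) (hsv : s ≤ v) (hi : i ≤ v) :
    D v S i ≤ (i - s) + (s - i) + 1 := by
  have hchord : Adj v S s v := ⟨hsv, le_refl v, by tauto⟩
  rcases le_total i s with h | h
  · have h1 : HW v S i s (s - i) := by
      have := hw_up (v := v) (S := S) (i := i) (d := s - i) (by omega)
      rwa [show i + (s - i) = s by omega] at this
    have := hw_concat h1 (hw_single hchord)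
    have := D_le this
    omega
  · have h1 : HW v S i s (i - s) := by
      have := hw_up (v := v) (S := S) (i := s) (d := i - s) (by omega)
      rw [show s + (i - s) = i by omega] at this
      exact hw_symm this
    have := D_le (hw_concat h1 (hw_single hchord))
    omega

theorem pot_le {φ : ℕ → ℕ} (hφv : φ v = 0)
    (hφ : ∀ a b, Adj v S a b → φ a ≤ φ b + 1) (hi : i ≤ v) : φ i ≤ D v S i := by
  have key : ∀ k i j, HW v S i j k → φ i ≤ φ j + k := by
    intro k
    induction k with
    | zero =>
        intro i j h
        obtain ⟨f, h0, hk, -⟩ := h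
        rw [← h0, hk]; omega
    | succ k ih =>
        intro i j h
        obtain ⟨m, hadj, hw⟩ := hw_tail h
        have := ih m j hw
        have := hφ i m hadj
        omega
  have := key _ _ _ (D_mem (v := v) (S := S) hi)
  omega

theorem pm_walk {f : ℕ → ℕ} :
    ∀ k, (∀ t, t < k → (f (t + 1) = f t + 1 ∨ f t = f (t + 1) + 1)) →
      (f 0 - f k) + (f k - f 0) ≤ k ∧ (f 0 + f k + k) % 2 = 0 := by
  intro k
  induction k with
  | zero => intro _; simp; omega
  | succ k ih =>
      intro h
      have h1 := ih (fun t ht => h t (by omega))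
      have h2 := h k (by omega)
      omega

theorem walk_iff (hv : S v) (hi : i ≤ v) (hj : j ≤ v) :
    HW v S i j k ↔
      ((i - j) + (j - i) ≤ k ∧ (i + j + k) % 2 = 0) ∨ D v S i + D v S j ≤ k := by
  constructor
  · rintro ⟨f, h0, hk, hstep⟩
    by_cases hhit : ∃ t, t ≤ k ∧ f t = v
    · right
      obtain ⟨t, htk, htv⟩ := hhit
      have h1 : D v S i ≤ t :=
        D_le ⟨f, h0, htv, fun s hs => hstep s (by omega)⟩
      have h2 : D v S j ≤ k - t := by
        apply D_le
        apply hw_symm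
        refine ⟨fun s => f (t + s), ?_, ?_, ?_⟩
        · show f (t + 0) = v
          simpa using htv
        · show f (t + (k - t)) = j
          rw [show t + (k - t) = k by omega, hk]
        · intro s hs
          show Adj v S (f (t + s)) (f (t + (s + 1)))
          have := hstep (t + s) (by omega)
          rwa [show t + s + 1 = t + (s + 1) by omega] at this
      omega
    · left
      push_neg at hhit
      have hpm : ∀ t, t < k → (f (t + 1) = f t + 1 ∨ f t = f (t + 1) + 1) := by
        intro t ht
        have hs := hstep t ht
        have h1 := hhit t (by omega)
        have h2 := hhit (t + 1) (by omega)
        rcases hs.2.2 with h | h | h | h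
        · tauto
        · tauto
        · exact absurd h.1 h1
        · exact absurd h.1 h2
      have := pm_walk k hpm
      rw [h0, hk] at this
      exact this
  · have aux : ∀ i j, i ≤ j → j ≤ v → j - i ≤ k → (i + j + k) % 2 = 0 → HW v S i j k := by
      intro i j hij hjv hd hp
      have hk2 : k = 2 * ((k - (j - i)) / 2) + (j - i) := by omega
      have h1 : HW v S i i (2 * ((k - (j - i)) / 2)) := hw_bounce hv (by omega) _
      have h2 : HW v S i j (j - i) := by
        have := hw_up (v := v) (S := S) (i := i) (d := j - i) (by omega)
        rwa [show i + (j - i) = j by omega] at this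
      rw [hk2]
      exact hw_concat h1 h2
    rintro (⟨hd, hp⟩ | hD)
    · rcases le_total i j with h | h
      · exact aux i j h hj (by omega) hp
      · exact hw_symm (aux j i h hi (by omega) (by omega))
    · have h1 := D_mem (v := v) (S := S) hi
      have h2 := hw_symm (D_mem (v := v) (S := S) hj)
      have h3 := hw_loop (v := v) (S := S) hv (k - (D v S i + D v S j))
      have := hw_concat (hw_concat h1 h3) h2
      rwa [show D v S i + (k - (D v S i + D v S j)) + D v S j = k by omega] at this

theorem hw_one (h : HW v S i j 1) : Adj v S i j := by
  obtain ⟨f, h0, h1, hs⟩ := h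
  have := hs 0 (by omega)
  rwa [h0, h1] at this

/-- `Good v S k` : every pair of vertices is joined by a walk of length `k`. -/
def Good (v : ℕ) (S : ℕ → Prop) (k : ℕ) : Prop :=
  0 < k ∧ ∀ i ≤ v, ∀ j ≤ v, HW v S i j k

theorem good_of_bound (hv : S v) {m k : ℕ} (hm : ∀ i ≤ v, D v S i ≤ m)
    (hk : 2 * m ≤ k) (h0 : 0 < k) : Good v S k := by
  refine ⟨h0, fun i hi j hj => ?_⟩
  rw [walk_iff hv hi hj]
  right
  have := hm i hi; have := hm j hj; omega

theorem good_odd (hv : S v) {k : ℕ} (h : Good v S k) (hk : k % 2 = 1) (hi : i ≤ v) :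
    2 * D v S i ≤ k := by
  have := (walk_iff hv hi hi).mp (h.2 i hi i hi)
  rcases this with ⟨-, hp⟩ | h2 <;> omega

theorem good_even (hv : S v) {k : ℕ} (h : Good v S k) (hk : k % 2 = 0) (hi : i + 1 ≤ v) :
    D v S i + D v S (i + 1) ≤ k := by
  have := (walk_iff hv (by omega) hi).mp (h.2 i (by omega) (i + 1) hi)
  rcases this with ⟨-, hp⟩ | h2 <;> omega

theorem least_construct (hv : S v) {a b : ℕ} (hb : 1 ≤ b) (ha : a + 1 ≤ v)
    (hub : ∀ i ≤ v, D v S i ≤ b) (hDa : b ≤ D v S a) (hDa1 : b ≤ D v S (a + 1) + 1) :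
    IsLeast {k | Good v S k} (2 * b) := by
  constructor
  · exact good_of_bound hv hub (le_refl _) (by omega)
  · intro k hk
    by_cases hpar : k % 2 = 1
    · have := good_odd hv hk hpar (show a ≤ v by omega)
      omega
    · have := good_even hv hk (by omega) ha
      omega

theorem least_bound (hv : S v) (hv1 : 1 ≤ v) {m e : ℕ} (hm : ∀ i ≤ v, D v S i ≤ m)
    (hl : IsLeast {k | Good v S k} e) : e % 2 = 0 ∧ 2 ≤ e ∧ e ≤ 2 * m := by
  obtain ⟨i0, hi0mem, hi0⟩ :=
    Finset.exists_max_image (Finset.range (v + 1)) (D v S) ⟨0, by simp⟩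
  have hi0v : i0 ≤ v := by
    have := Finset.mem_range.mp hi0mem; omega
  have hDM : ∀ i ≤ v, D v S i ≤ D v S i0 := fun i hi =>
    hi0 i (Finset.mem_range.mpr (by omega))
  have hM1 : 1 ≤ D v S i0 :=
    le_trans (D_pos (show (0:ℕ) ≤ v by omega) (by omega)) (hDM 0 (by omega))
  have h2M : Good v S (2 * D v S i0) := good_of_bound hv hDM (le_refl _) (by omega)
  have hle : e ≤ 2 * D v S i0 := hl.2 h2M
  have heven : e % 2 = 0 := by
    by_contra hodd
    have := good_odd hv hl.1 (by omega) hi0v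
    omega
  refine ⟨heven, ?_, ?_⟩
  · have := hl.1.1; omega
  · have := hm i0 hi0v; omega

/-! ### Matrices and walks -/

theorem pow_entry_nonneg {n : ℕ} {A : Matrix (Fin n) (Fin n) ℝ} (hA : ∀ i j, 0 ≤ A i j) :
    ∀ k (i j : Fin n), 0 ≤ (A ^ k) i j := by
  intro k
  induction k with
  | zero =>
      intro i j
      rw [pow_zero]
      by_cases h : i = j <;> simp [Matrix.one_apply, h]
  | succ k ih =>
      intro i j
      rw [pow_succ, Matrix.mul_apply]
      exact Finset.sum_nonneg fun m _ => mul_nonneg (ih i m) (hA m j)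

theorem sum_pos_iff' {n : ℕ} {f : Fin n → ℝ} (h : ∀ i, 0 ≤ f i) :
    (0 < ∑ i, f i) ↔ ∃ i, 0 < f i := by
  constructor
  · intro hs
    by_contra hc
    push_neg at hc
    have : ∀ i ∈ Finset.univ, f i = 0 := fun i _ => le_antisymm (hc i) (h i)
    rw [Finset.sum_eq_zero this] at hs
    exact lt_irrefl 0 hs
  · rintro ⟨i, hi⟩
    exact Finset.sum_pos' (fun m _ => h m) ⟨i, Finset.mem_univ i, hi⟩

theorem pow_pos_iff {n : ℕ} {A : Matrix (Fin n) (Fin n) ℝ} (hA : ∀ i j, 0 ≤ A i j) :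
    ∀ k (i j : Fin n), 0 < (A ^ k) i j ↔
      ∃ g : ℕ → Fin n, g 0 = i ∧ g k = j ∧ ∀ t, t < k → 0 < A (g t) (g (t + 1)) := by
  intro k
  induction k with
  | zero =>
      intro i j
      rw [pow_zero]
      constructor
      · intro h
        have hij : i = j := by
          by_contra hne
          rw [Matrix.one_apply_ne hne] at h
          exact lt_irrefl 0 h
        exact ⟨fun _ => i, rfl, hij ▸ rfl, fun t ht => absurd ht (Nat.not_lt_zero t)⟩
      · rintro ⟨g, h0, hk, -⟩
        rw [← h0, hk, Matrix.one_apply_eq]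
        norm_num
  | succ k ih =>
      intro i j
      rw [pow_succ, Matrix.mul_apply]
      rw [sum_pos_iff' (fun m => mul_nonneg (pow_entry_nonneg hA k i m) (hA m j))]
      constructor
      · rintro ⟨m, hm⟩
        have h1 : 0 < (A ^ k) i m := by
          rcases lt_or_eq_of_le (pow_entry_nonneg hA k i m) with h | h
          · exact h
          · rw [← h] at hm; simp at hm
        have h2 : 0 < A m j := by
          by_contra hc
          push_neg at hc
          have : A m j = 0 := le_antisymm hc (hA m j)
          rw [this] at hm; simp at hm
        obtain ⟨g, hg0, hgk, hgs⟩ := (ih i m).mp h1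
        refine ⟨fun t => if t ≤ k then g t else j, ?_, ?_, ?_⟩
        · show (if 0 ≤ k then g 0 else j) = i
          rw [if_pos (by omega), hg0]
        · show (if k + 1 ≤ k then g (k + 1) else j) = j
          rw [if_neg (by omega)]
        · intro t ht
          show 0 < A (if t ≤ k then g t else j) (if t + 1 ≤ k then g (t + 1) else j)
          by_cases h : t + 1 ≤ k
          · rw [if_pos (by omega), if_pos h]
            exact hgs t (by omega)
          · have ht' : t = k := by omega
            rw [if_pos (by omega : t ≤ k), if_neg h, ht', hgk]
            exact h2
      · rintro ⟨g, hg0, hgk, hgs⟩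
        refine ⟨g k, mul_pos ?_ ?_⟩
        · exact (ih i (g k)).mpr ⟨g, hg0, rfl, fun t ht => hgs t (by omega)⟩
        · have := hgs k (by omega)
          rwa [hgk] at this

/-- Bridge between matrix-power positivity and the combinatorial walk condition. -/
theorem bridge {n : ℕ} (hn : 1 ≤ n) {A : Matrix (Fin n) (Fin n) ℝ} {S : ℕ → Prop}
    (hA : ∀ i j, 0 ≤ A i j)
    (hadj : ∀ i j : Fin n, (0 < A i j ↔ Adj (n - 1) S (i : ℕ) (j : ℕ))) (k : ℕ) :
    (0 < k ∧ ∀ i j : Fin n, 0 < (A ^ k) i j) ↔ Good (n - 1) S k := by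
  unfold Good
  refine and_congr_right fun hk => ?_
  constructor
  · intro h i hi j hj
    have hi' : i < n := by omega
    have hj' : j < n := by omega
    obtain ⟨g, hg0, hgk, hgs⟩ := (pow_pos_iff hA k ⟨i, hi'⟩ ⟨j, hj'⟩).mp (h _ _)
    refine ⟨fun t => (g t : ℕ), ?_, ?_, ?_⟩
    · show ((g 0 : Fin n) : ℕ) = i
      rw [hg0]
    · show ((g k : Fin n) : ℕ) = j
      rw [hgk]
    intro t ht
    exact (hadj _ _).mp (hgs t ht)
  · intro h i j
    obtain ⟨f, hf0, hfk, hfs⟩ := h (i : ℕ) (by omega) (j : ℕ) (by omega)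
    apply (pow_pos_iff hA k i j).mpr
    have hbound : ∀ t, t ≤ k → f t < n := by
      intro t ht
      rcases Nat.lt_or_ge t k with h' | h'
      · have := (hfs t h').1; omega
      · have : t = k := by omega
        rw [this, hfk]; omega
    refine ⟨fun t => if h : f t < n then ⟨f t, h⟩ else i, ?_, ?_, ?_⟩
    · show (if h : f 0 < n then (⟨f 0, h⟩ : Fin n) else i) = i
      rw [dif_pos (hbound 0 (by omega))]
      exact Fin.ext hf0
    · show (if h : f k < n then (⟨f k, h⟩ : Fin n) else i) = j
      rw [dif_pos (hbound k (by omega))]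
      exact Fin.ext hfk
    · intro t ht
      show 0 < A (if h : f t < n then (⟨f t, h⟩ : Fin n) else i)
          (if h : f (t + 1) < n then (⟨f (t + 1), h⟩ : Fin n) else i)
      rw [dif_pos (hbound t (by omega)), dif_pos (hbound (t + 1) (by omega))]
      exact (hadj _ _).mpr (hfs t ht)


/-! ### Decoding a companion matrix as a graph -/

theorem decode {n : ℕ} (hn : 2 ≤ n) {C : Matrix (Fin n) (Fin n) ℝ} (hC : IsCompanion C)
    {S : ℕ → Prop} (hS : ∀ j : Fin n, (S (j : ℕ) ↔ C ⟨n - 1, by omega⟩ j ≠ 0)) :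
    (∀ i j, 0 ≤ (C + C.transpose) i j) ∧
      ∀ i j : Fin n, (0 < (C + C.transpose) i j ↔ Adj (n - 1) S (i : ℕ) (j : ℕ)) := by
  have h01 : ∀ i j : Fin n, C i j = 0 ∨ C i j = 1 := by
    intro i j
    have h := hC i j
    by_cases hi : (i : ℕ) + 1 < n
    · rw [if_pos hi] at h
      rw [h]
      by_cases hj : (j : ℕ) = (i : ℕ) + 1 <;> simp [hj]
    · rwa [if_neg hi] at h
  have hC1 : ∀ i j : Fin n,
      (C i j ≠ 0 ↔ ((j : ℕ) = (i : ℕ) + 1 ∧ (i : ℕ) + 1 < n) ∨ ((i : ℕ) = n - 1 ∧ S (j : ℕ))) := by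
    intro i j
    by_cases hi : (i : ℕ) + 1 < n
    · have h := hC i j
      rw [if_pos hi] at h
      rw [h]
      by_cases hj : (j : ℕ) = (i : ℕ) + 1
      · simp only [if_pos hj]
        constructor
        · intro _; exact Or.inl ⟨hj, hi⟩
        · intro _; norm_num
      · simp only [if_neg hj]
        constructor
        · intro hcon; exact absurd rfl hcon
        · rintro (⟨h1, -⟩ | ⟨h1, -⟩)
          · exact absurd h1 hj
          · omega
    · have hieq : (i : ℕ) = n - 1 := by have := i.2; omega
      have hieq' : i = ⟨n - 1, by omega⟩ := Fin.ext hieq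
      rw [hieq', ← hS j]
      constructor
      · intro h; exact Or.inr ⟨rfl, h⟩
      · rintro (⟨-, h1⟩ | ⟨-, h1⟩)
        · omega
        · exact h1
  have hnn : ∀ i j : Fin n, 0 ≤ (C + C.transpose) i j := by
    intro i j
    have h1 := h01 i j
    have h2 := h01 j i
    show 0 ≤ C i j + C j i
    rcases h1 with h1 | h1 <;> rcases h2 with h2 | h2 <;> rw [h1, h2] <;> norm_num
  refine ⟨hnn, fun i j => ?_⟩
  have hform : (C + C.transpose) i j = C i j + C j i := rfl
  constructor
  · intro h
    rw [hform] at h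
    have key : C i j ≠ 0 ∨ C j i ≠ 0 := by
      by_contra hcon
      push_neg at hcon
      rw [hcon.1, hcon.2] at h
      norm_num at h
    refine ⟨by have := i.2; omega, by have := j.2; omega, ?_⟩
    rcases key with h' | h'
    · rcases (hC1 i j).mp h' with ⟨h2, -⟩ | ⟨h2, h3⟩
      · exact Or.inl h2
      · exact Or.inr (Or.inr (Or.inl ⟨h2, h3⟩))
    · rcases (hC1 j i).mp h' with ⟨h2, -⟩ | ⟨h2, h3⟩
      · exact Or.inr (Or.inl h2)
      · exact Or.inr (Or.inr (Or.inr ⟨h2, h3⟩))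
  · rintro ⟨hiv, hjv, hcase⟩
    have key : C i j ≠ 0 ∨ C j i ≠ 0 := by
      rcases hcase with h | h | h | h
      · left; rw [hC1]; left; exact ⟨h, by have := j.2; omega⟩
      · right; rw [hC1]; left; exact ⟨h, by have := i.2; omega⟩
      · left; rw [hC1]; right; exact h
      · right; rw [hC1]; right; exact h
    rw [hform]
    have h1 := h01 i j
    have h2 := h01 j i
    rcases h1 with h1 | h1 <;> rcases h2 with h2 | h2 <;> rw [h1, h2] <;>
      first
        | (exfalso; rcases key with h' | h' <;> exact h' (by assumption))
        | norm_num

/-! ### Explicit companion matrices -/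

def Cmat (n : ℕ) (s : ℕ → Prop) [DecidablePred s] : Matrix (Fin n) (Fin n) ℝ :=
  Matrix.of fun i j =>
    if (i : ℕ) + 1 < n then (if (j : ℕ) = (i : ℕ) + 1 then 1 else 0)
    else (if s (j : ℕ) then 1 else 0)

theorem cmat_companion {n : ℕ} {s : ℕ → Prop} [DecidablePred s] :
    IsCompanion (Cmat n s) := by
  intro i j
  have hval : Cmat n s i j = if (i : ℕ) + 1 < n then (if (j : ℕ) = (i : ℕ) + 1 then (1:ℝ) else 0)
      else (if s (j : ℕ) then 1 else 0) := rfl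
  by_cases h : (i : ℕ) + 1 < n
  · rw [if_pos h, hval, if_pos h]
  · rw [if_neg h, hval, if_neg h]
    by_cases hs : s (j : ℕ)
    · right; rw [if_pos hs]
    · left; rw [if_neg hs]

theorem cmat_last {n : ℕ} (hn : 1 ≤ n) {s : ℕ → Prop} [DecidablePred s] (j : Fin n) :
    Cmat n s ⟨n - 1, by omega⟩ j = if s (j : ℕ) then 1 else 0 := by
  show (if (n - 1) + 1 < n then _ else _) = _
  rw [if_neg (by omega)]

theorem cmat_decode {n : ℕ} (hn : 1 ≤ n) {s : ℕ → Prop} [DecidablePred s] (j : Fin n) :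
    s (j : ℕ) ↔ Cmat n s ⟨n - 1, by omega⟩ j ≠ 0 := by
  rw [cmat_last hn]
  by_cases hs : s (j : ℕ) <;> simp [hs]

/-! ### The two constructions -/

theorem pos_of_four_le {n : ℕ} (hn : 4 ≤ n) : 0 < n := by omega

theorem configA {n t : ℕ} (hn : 4 ≤ n) (ht : t ≤ (n - 2) / 2) :
    ∃ A ∈ companionClass n (pos_of_four_le hn) 1 1, IsPrimitive A ∧ ExpIs A (2 * (t + 1)) := by
  have ht2 : 2 * t ≤ n - 2 := by omega
  set s : ℕ → Prop := fun j => j = 0 ∨ (2 * t + 1 ≤ j ∧ j ≤ n - 2) ∨ j = n - 1 with hs_def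
  have hsdec : DecidablePred s := fun j => by unfold s; infer_instance
  have hcomp : IsCompanion (Cmat n s) := cmat_companion
  obtain ⟨hA0, hadj⟩ := decode (by omega) hcomp (fun j => cmat_decode (by omega) j)
  have hv : s (n - 1) := Or.inr (Or.inr rfl)
  have hub : ∀ i ≤ n - 1, D (n - 1) s i ≤ t + 1 := by
    intro i hi
    by_cases hiv : i = n - 1
    · have := D_le_path (v := n - 1) (S := s) (i := i) hi
      omega
    by_cases h1 : i ≤ t
    · have := D_le_chord (v := n - 1) (S := s) (s := 0) (Or.inl rfl) (by omega) hi
      omega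
    by_cases h2 : i ≤ 2 * t
    · by_cases h3 : 2 * t + 1 ≤ n - 2
      · have := D_le_chord (v := n - 1) (S := s) (s := 2 * t + 1)
          (Or.inr (Or.inl ⟨le_refl _, h3⟩)) (by omega) hi
        omega
      · have := D_le_path (v := n - 1) (S := s) (i := i) hi
        omega
    · have := D_le_chord (v := n - 1) (S := s) (s := i)
        (Or.inr (Or.inl ⟨by omega, by omega⟩)) (by omega) hi
      omega
  have hpot : ∀ i ≤ n - 1, min (min (i + 1) (2 * t + 2 - i)) (n - 1 - i) ≤ D (n - 1) s i := by
    intro i hi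
    refine pot_le (φ := fun i => min (min (i + 1) (2 * t + 2 - i)) (n - 1 - i)) ?_ ?_ hi
    · omega
    · rintro a b ⟨hav, hbv, hc⟩
      rcases hc with h | h | ⟨h, hsb⟩ | ⟨h, hsa⟩
      · omega
      · omega
      · omega
      · rcases hsa with h0 | ⟨h1, h2⟩ | h3 <;> omega
  have hl : IsLeast {k | Good (n - 1) s k} (2 * (t + 1)) := by
    apply least_construct hv (by omega) (a := t) (by omega) hub
    · have := hpot t (by omega); omega
    · have := hpot (t + 1) (by omega); omega
  have hsetEq : {k : ℕ | 0 < k ∧ ∀ i j, 0 < (((Cmat n s) + (Cmat n s).transpose) ^ k) i j} =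
      {k | Good (n - 1) s k} :=
    Set.ext fun k => bridge (by omega) hA0 hadj k
  refine ⟨(Cmat n s) + (Cmat n s).transpose, ⟨Cmat n s, hcomp, ?_, ?_, rfl⟩, ?_, ?_⟩
  · rw [cmat_last (by omega)]
    have : s ((⟨0, by omega⟩ : Fin n) : ℕ) := Or.inl rfl
    rw [if_pos this]
  · rw [cmat_last (by omega)]
    have : s ((⟨n - 1, by omega⟩ : Fin n) : ℕ) := Or.inr (Or.inr rfl)
    rw [if_pos this]
  · refine ⟨hA0, 2 * (t + 1), by omega, ?_⟩
    have := hl.1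
    rw [← hsetEq] at this
    exact this.2
  · unfold ExpIs
    rw [hsetEq]
    exact hl

theorem configB {n t : ℕ} (hn : 4 ≤ n) (ht1 : 2 ≤ t) (ht2 : t ≤ n - 1) :
    ∃ A ∈ companionClass n (pos_of_four_le hn) 0 1, IsPrimitive A ∧ ExpIs A (2 * t) := by
  obtain ⟨g, rfl⟩ : ∃ g, t = g + 1 := ⟨t - 1, by omega⟩
  have hg1 : 1 ≤ g := by omega
  have hg2 : g ≤ n - 2 := by omega
  set s : ℕ → Prop := fun j => (g ≤ j ∧ j ≤ n - 2) ∨ j = n - 1 with hs_def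
  have hsdec : DecidablePred s := fun j => by unfold s; infer_instance
  have hcomp : IsCompanion (Cmat n s) := cmat_companion
  obtain ⟨hA0, hadj⟩ := decode (by omega) hcomp (fun j => cmat_decode (by omega) j)
  have hv : s (n - 1) := Or.inr rfl
  have hub : ∀ i ≤ n - 1, D (n - 1) s i ≤ g + 1 := by
    intro i hi
    by_cases hiv : i = n - 1
    · have := D_le_path (v := n - 1) (S := s) (i := i) hi
      omega
    by_cases h1 : i ≤ g
    · have := D_le_chord (v := n - 1) (S := s) (s := g) (Or.inl ⟨le_refl _, hg2⟩) (by omega) hi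
      omega
    · have := D_le_chord (v := n - 1) (S := s) (s := i) (Or.inl ⟨by omega, by omega⟩) (by omega) hi
      omega
  have hpot : ∀ i ≤ n - 1, min (g + 1 - i) (n - 1 - i) ≤ D (n - 1) s i := by
    intro i hi
    refine pot_le (φ := fun i => min (g + 1 - i) (n - 1 - i)) ?_ ?_ hi
    · omega
    · rintro a b ⟨hav, hbv, hc⟩
      rcases hc with h | h | ⟨h, hsb⟩ | ⟨h, hsa⟩
      · omega
      · omega
      · omega
      · rcases hsa with ⟨h1, h2⟩ | h3 <;> omega
  have hl : IsLeast {k | Good (n - 1) s k} (2 * (g + 1)) := by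
    apply least_construct hv (by omega) (a := 0) (by omega) hub
    · have := hpot 0 (by omega); omega
    · have := hpot (0 + 1) (by omega); omega
  have hsetEq : {k : ℕ | 0 < k ∧ ∀ i j, 0 < (((Cmat n s) + (Cmat n s).transpose) ^ k) i j} =
      {k | Good (n - 1) s k} :=
    Set.ext fun k => bridge (by omega) hA0 hadj k
  refine ⟨(Cmat n s) + (Cmat n s).transpose, ⟨Cmat n s, hcomp, ?_, ?_, rfl⟩, ?_, ?_⟩
  · rw [cmat_last (by omega)]
    have : ¬ s ((⟨0, by omega⟩ : Fin n) : ℕ) := by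
      unfold s
      simp only
      omega
    rw [if_neg this]
  · rw [cmat_last (by omega)]
    have : s ((⟨n - 1, by omega⟩ : Fin n) : ℕ) := Or.inr rfl
    rw [if_pos this]
  · refine ⟨hA0, 2 * (g + 1), by omega, ?_⟩
    have := hl.1
    rw [← hsetEq] at this
    exact this.2
  · unfold ExpIs
    rw [hsetEq]
    exact hl

/-! ### The containment directions -/

theorem subset_one {n : ℕ} (hn : 4 ≤ n) {e : ℕ}
    (he : e ∈ expSet (companionClass n (pos_of_four_le hn) 1 1)) :
    ∃ t : ℕ, t ≤ (n - 2) / 2 ∧ e = 2 * (t + 1) := by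
  obtain ⟨A, ⟨C, hC, hα, hε, rfl⟩, hprim, hexp⟩ := he
  set S : ℕ → Prop := fun m => ∃ h : m < n, C ⟨n - 1, by omega⟩ ⟨m, h⟩ ≠ 0 with hS_def
  have hS : ∀ j : Fin n, (S (j : ℕ) ↔ C ⟨n - 1, by omega⟩ j ≠ 0) := by
    intro j
    constructor
    · rintro ⟨h, hne⟩
      convert hne using 2
    · intro h
      exact ⟨j.2, by convert h using 2⟩
  obtain ⟨hA0, hadj⟩ := decode (by omega) hC hS
  have hsetEq : {k : ℕ | 0 < k ∧ ∀ i j, 0 < ((C + C.transpose) ^ k) i j} =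
      {k | Good (n - 1) S k} :=
    Set.ext fun k => bridge (by omega) hA0 hadj k
  have hl : IsLeast {k | Good (n - 1) S k} e := by
    unfold ExpIs at hexp
    rwa [hsetEq] at hexp
  have hv : S (n - 1) := ⟨by omega, by
    have h1 : C ⟨n - 1, by omega⟩ ⟨n - 1, by omega⟩ = 1 := hε
    rw [h1]; norm_num⟩
  have h0 : S 0 := ⟨by omega, by
    have h1 : C ⟨n - 1, by omega⟩ ⟨0, by omega⟩ = 1 := hα
    rw [h1]; norm_num⟩
  have hub : ∀ i ≤ n - 1, D (n - 1) S i ≤ n / 2 := by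
    intro i hi
    have c1 := D_le_chord (v := n - 1) (S := S) (s := 0) h0 (by omega) hi
    have c2 := D_le_path (v := n - 1) (S := S) (i := i) hi
    omega
  have := least_bound hv (by omega) hub hl
  exact ⟨e / 2 - 1, by omega, by omega⟩

theorem subset_zero {n : ℕ} (hn : 4 ≤ n) {e : ℕ}
    (he : e ∈ expSet (companionClass n (pos_of_four_le hn) 0 1)) :
    ∃ t : ℕ, 2 ≤ t ∧ t ≤ n - 1 ∧ e = 2 * t := by
  obtain ⟨A, ⟨C, hC, hα, hε, rfl⟩, hprim, hexp⟩ := he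
  set S : ℕ → Prop := fun m => ∃ h : m < n, C ⟨n - 1, by omega⟩ ⟨m, h⟩ ≠ 0 with hS_def
  have hS : ∀ j : Fin n, (S (j : ℕ) ↔ C ⟨n - 1, by omega⟩ j ≠ 0) := by
    intro j
    constructor
    · rintro ⟨h, hne⟩
      convert hne using 2
    · intro h
      exact ⟨j.2, by convert h using 2⟩
  obtain ⟨hA0, hadj⟩ := decode (by omega) hC hS
  have hsetEq : {k : ℕ | 0 < k ∧ ∀ i j, 0 < ((C + C.transpose) ^ k) i j} =
      {k | Good (n - 1) S k} :=
    Set.ext fun k => bridge (by omega) hA0 hadj k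
  have hl : IsLeast {k | Good (n - 1) S k} e := by
    unfold ExpIs at hexp
    rwa [hsetEq] at hexp
  have hv : S (n - 1) := ⟨by omega, by
    have h1 : C ⟨n - 1, by omega⟩ ⟨n - 1, by omega⟩ = 1 := hε
    rw [h1]; norm_num⟩
  have hnS0 : ¬ S 0 := by
    rintro ⟨h, hne⟩
    have h1 : C ⟨n - 1, by omega⟩ ⟨0, by omega⟩ = 0 := hα
    exact hne h1
  have hub : ∀ i ≤ n - 1, D (n - 1) S i ≤ n - 1 := by
    intro i hi
    have := D_le_path (v := n - 1) (S := S) (i := i) hi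
    omega
  have hbd := least_bound hv (by omega) hub hl
  have hD0 : 2 ≤ D (n - 1) S 0 := by
    have h1 := D_pos (v := n - 1) (S := S) (i := 0) (by omega) (by omega)
    by_contra hcon
    have hD1 : D (n - 1) S 0 = 1 := by omega
    have hw := D_mem (v := n - 1) (S := S) (i := 0) (by omega)
    rw [hD1] at hw
    obtain ⟨-, -, hc⟩ := hw_one hw
    rcases hc with h | h | ⟨h, -⟩ | ⟨-, h⟩
    · omega
    · omega
    · omega
    · exact hnS0 h
  have hD1 : 1 ≤ D (n - 1) S 1 := D_pos (by omega) (by omega)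
  have hne2 : e ≠ 2 := by
    intro he2
    have hg : Good (n - 1) S 2 := he2 ▸ hl.1
    have := (walk_iff hv (show (0:ℕ) ≤ n - 1 by omega) (show (1:ℕ) ≤ n - 1 by omega)).mp
      (hg.2 0 (by omega) 1 (by omega))
    rcases this with ⟨-, hp⟩ | h2
    · omega
    · omega
  exact ⟨e / 2, by omega, by omega, by omega⟩

end PSC

/-- For `n ≥ 4`, `E(PSC_n^{1,1}) = {2(t+1) : 0 ≤ t ≤ ⌊(n-2)/2⌋}` and
`E(PSC_n^{0,1}) = {2t : 2 ≤ t ≤ n-1}`; in particular `2(n-1)` is attained. -/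
theorem expSet_PSC_one_one_and_zero_one {n : ℕ} (hn : 4 ≤ n) :
    expSet (companionClass n (by omega) 1 1) =
        {e : ℕ | ∃ t : ℕ, t ≤ (n - 2) / 2 ∧ e = 2 * (t + 1)} ∧
      expSet (companionClass n (by omega) 0 1) =
        {e : ℕ | ∃ t : ℕ, 2 ≤ t ∧ t ≤ n - 1 ∧ e = 2 * t} ∧
      2 * (n - 1) ∈ expSet (companionClass n (by omega) 0 1) := by
  refine ⟨?_, ?_, ?_⟩
  · ext e
    constructor
    · exact fun he => PSC.subset_one hn he
    · rintro ⟨t, ht, rfl⟩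
      exact PSC.configA hn ht
  · ext e
    constructor
    · exact fun he => PSC.subset_zero hn he
    · rintro ⟨t, ht1, ht2, rfl⟩
      exact PSC.configB hn ht1 ht2
  · exact PSC.configB hn (by omega) (le_refl _)
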